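/- arXiv:1902.02523 — 2 statements merged into one kernel-verified Lean document; each statement's English description precedes it below -/
import Mathlib

section
/- Under the assumptions of the weighted KL-average theorem, the minimum value of the cost J(f) = Σᵢ ωⁱ D_KL(f ‖ fⁱ), attained at the normalized geometric mean f̄, equals −log(∫ ∏ᵢ [fⁱ(x)]^{ωⁱ} dx). -/
open MeasureTheory Real

/-- Kullback-Leibler divergence between densities on ℝᵈ. -/
noncomputable def klDiv {d : ℕ} (f g : (Fin d → ℝ) → ℝ) : ℝ :=
  ∫ x, f x * Real.log (f x / g x)

theorem wkla_min_value {d N : ℕ} (f : Fin N → (Fin d → ℝ) → ℝ) (ω : Fin N → ℝ)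
    (hfpos : ∀ i x, 0 < f i x) (hfmeas : ∀ i, Measurable (f i))
    (hfint : ∀ i, (∫ x, f i x) = 1)
    (hω : ∀ i, 0 ≤ ω i) (hω1 : ∑ i, ω i = 1)
    (Z : ℝ) (hZ : Z = ∫ x, ∏ i, f i x ^ ω i) (hZpos : 0 < Z)
    (hZint : Integrable fun x : Fin d → ℝ => ∏ i, f i x ^ ω i)
    (hint : ∀ i, Integrable fun x : Fin d → ℝ =>
      ((∏ j, f j x ^ ω j) / Z) * Real.log ((∏ j, f j x ^ ω j) / Z / f i x)) :
    ∑ i, ω i * klDiv (fun x => (∏ j, f j x ^ ω j) / Z) (f i) = -Real.log Z := by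
  have hPpos : ∀ x, 0 < ∏ j, f j x ^ ω j := fun x =>
    Finset.prod_pos fun j _ => Real.rpow_pos_of_pos (hfpos j x) _
  -- rewrite each term as an integral of a scaled function
  have h1 : ∀ i, ω i * klDiv (fun x => (∏ j, f j x ^ ω j) / Z) (f i)
      = ∫ x, ω i * (((∏ j, f j x ^ ω j) / Z) * Real.log ((∏ j, f j x ^ ω j) / Z / f i x)) := by
    intro i
    rw [klDiv, ← integral_const_mul]
  simp_rw [h1]
  rw [← integral_finset_sum _ (fun i _ => (hint i).const_mul _)]
  have key : ∀ x : Fin d → ℝ,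
      (∑ i, ω i * (((∏ j, f j x ^ ω j) / Z) * Real.log ((∏ j, f j x ^ ω j) / Z / f i x)))
      = ((∏ j, f j x ^ ω j) / Z) * (-Real.log Z) := by
    intro x
    set P := ∏ j, f j x ^ ω j with hP
    have hPp := hPpos x
    have hlogP : Real.log P = ∑ j, ω j * Real.log (f j x) := by
      rw [hP, Real.log_prod (fun j _ => (Real.rpow_pos_of_pos (hfpos j x) _).ne')]
      exact Finset.sum_congr rfl fun j _ => Real.log_rpow (hfpos j x) _
    have hlog : ∀ i, Real.log (P / Z / f i x)
        = Real.log P - Real.log Z - Real.log (f i x) := by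
      intro i
      rw [Real.log_div (by positivity) (hfpos i x).ne',
        Real.log_div hPp.ne' hZpos.ne']
    simp_rw [hlog]
    have : (∑ i, ω i * ((P / Z) * (Real.log P - Real.log Z - Real.log (f i x))))
        = (P / Z) * ((Real.log P - Real.log Z) * (∑ i, ω i)
            - ∑ i, ω i * Real.log (f i x)) := by
      simp only [mul_sub, Finset.mul_sum, ← Finset.sum_sub_distrib]
      exact Finset.sum_congr rfl fun i _ => by ring
    rw [this, hω1, ← hlogP]
    ring
  simp_rw [key]
  have hint2 : ∫ x, ((∏ j, f j x ^ ω j) / Z) * (-Real.log Z)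
      = (∫ x, (∏ j, f j x ^ ω j) / Z) * (-Real.log Z) := integral_mul_const _ _
  rw [hint2]
  have : (∫ x, (∏ j, f j x ^ ω j) / Z) = 1 := by
    rw [integral_div, ← hZ, div_self hZpos.ne']
  rw [this, one_mul]
end

section
/- Let p¹,…,pᴺ be probability mass functions on {0,1,…,N_max}, s¹,…,sᴺ positive probability densities on ℝᵈ, and ωⁱ ≥ 0 with Σᵢ ωⁱ = 1. Define W = ∫ ∏ᵢ [sⁱ(x)]^{ωⁱ} dx (assumed finite and positive) and cⁿ = ∏ᵢ [pⁱ(n)]^{ωⁱ}. Then the set integral of the weighted geometric mean of the i.i.d. cluster densities fⁱ(X) = |X|! pⁱ(|X|) ∏_{x∈X} sⁱ(x) equals Σ_{n=0}^{N_max} cⁿ Wⁿ; equivalently, the GCI divergence equals −log(Σ_{n=0}^{N_max} cⁿ Wⁿ). -/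
open MeasureTheory Real

/-- The set integral of the weighted geometric mean of i.i.d. cluster densities
`fⁱ(X) = |X|! pⁱ(|X|) ∏_{x∈X} sⁱ(x)`, expressed via the tuple representation of
finite sets, equals `Σ_{n=0}^{Nmax} cⁿ Wⁿ`. -/
theorem gci_iid_cluster_set_integral {d N : ℕ} (Nmax : ℕ)
    (p : Fin N → ℕ → ℝ) (s : Fin N → (Fin d → ℝ) → ℝ) (ω : Fin N → ℝ)
    (hp : ∀ i n, 0 ≤ p i n) (hpsupp : ∀ i n, Nmax < n → p i n = 0)
    (hp1 : ∀ i, ∑ n ∈ Finset.range (Nmax + 1), p i n = 1)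
    (hs : ∀ i x, 0 < s i x) (hsmeas : ∀ i, Measurable (s i))
    (hsint : ∀ i, (∫ x, s i x) = 1)
    (hω : ∀ i, 0 ≤ ω i) (hω1 : ∑ i, ω i = 1)
    (W : ℝ) (hW : W = ∫ x, ∏ i, s i x ^ ω i) (hWpos : 0 < W)
    (hWint : Integrable fun x : Fin d → ℝ => ∏ i, s i x ^ ω i)
    (c : ℕ → ℝ) (hc : ∀ n, c n = ∏ i, p i n ^ ω i) :
    ∑ n ∈ Finset.range (Nmax + 1), ((n.factorial : ℝ))⁻¹ *
        ∫ x : Fin n → (Fin d → ℝ),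
          ∏ i, ((n.factorial : ℝ) * p i n * ∏ k, s i (x k)) ^ ω i
      = ∑ n ∈ Finset.range (Nmax + 1), c n * W ^ n := by
  refine Finset.sum_congr rfl fun n _ => ?_
  have hfac : (0 : ℝ) < (n.factorial : ℝ) := by exact_mod_cast n.factorial_pos
  have hsplit : ∀ x : Fin n → (Fin d → ℝ),
      (∏ i, ((n.factorial : ℝ) * p i n * ∏ k, s i (x k)) ^ ω i)
        = (n.factorial : ℝ) * c n * ∏ k, ∏ i, s i (x k) ^ ω i := by
    intro x
    have h1 : ∀ i : Fin N,
        ((n.factorial : ℝ) * p i n * ∏ k, s i (x k)) ^ ω i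
          = (n.factorial : ℝ) ^ ω i * (p i n) ^ ω i * (∏ k, s i (x k)) ^ ω i := by
      intro i
      rw [Real.mul_rpow (mul_nonneg hfac.le (hp i n)) (Finset.prod_nonneg fun k _ => (hs i (x k)).le),
        Real.mul_rpow hfac.le (hp i n)]
    simp only [h1]
    rw [Finset.prod_mul_distrib, Finset.prod_mul_distrib]
    have h2 : (∏ i : Fin N, (n.factorial : ℝ) ^ ω i) = (n.factorial : ℝ) := by
      rw [← Real.rpow_sum_of_pos hfac, hω1, Real.rpow_one]
    have h3 : (∏ i : Fin N, (∏ k, s i (x k)) ^ ω i) = ∏ k, ∏ i, s i (x k) ^ ω i := by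
      rw [Finset.prod_comm]
      refine Finset.prod_congr rfl fun i _ => ?_
      exact (Real.finset_prod_rpow _ _ (fun k _ => (hs i (x k)).le) _).symm
    rw [h2, h3, hc]
  simp only [hsplit]
  rw [integral_const_mul, MeasureTheory.integral_fintype_prod_volume_eq_pow (ι := Fin n)
      (fun y : Fin d → ℝ => ∏ i, s i y ^ ω i), ← hW]
  simp only [Fintype.card_fin]
  field_simp
end
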